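/- In a DAG, every node is d-separated from its non-descendants given its parents: for any node \(j\), the singleton \(\{j\}\) is d-separated from \(\mathrm{nd}(j) \setminus \mathrm{pa}(j)\) by \(\mathrm{pa}(j)\), where \(\mathrm{nd}(j)\) is the set of nodes \(k \ne j\) with no directed path from \(j\) to \(k\). -/
import Mathlib
set_option maxHeartbeats 1000000


/-- A directed acyclic graph on vertex set `Fin d`. -/
structure DAG (d : ℕ) where
  edges : Finset (Fin d × Fin d)
  acyclic : ∀ j, ¬ Relation.TransGen (fun a b => (a, b) ∈ edges) j j

namespace DAG

variable {d : ℕ}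

/-- The edge relation `a → b`. -/
def edge (G : DAG d) (a b : Fin d) : Prop := (a, b) ∈ G.edges

/-- The parent set of a node. -/
def pa (G : DAG d) (j : Fin d) : Finset (Fin d) :=
  Finset.univ.filter fun k => (k, j) ∈ G.edges

/-- Adjacency (skeleton relation). -/
def adj (G : DAG d) (a b : Fin d) : Prop := G.edge a b ∨ G.edge b a

/-- A trail (as a list of distinct consecutively adjacent nodes) is active given `C` if
every interior collider on it lies in `C` and no non-collider node lies in `C`. -/
def ActiveTrail (G : DAG d) (C : Set (Fin d)) (l : List (Fin d)) : Prop :=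
  2 ≤ l.length ∧ l.Nodup ∧ l.Chain' G.adj ∧
  (∀ i, (h : i + 2 < l.length) →
    (G.edge (l[i]'(by omega)) (l[i+1]'(by omega)) ∧
      G.edge (l[i+2]'h) (l[i+1]'(by omega))) →
    l[i+1]'(by omega) ∈ C) ∧
  (∀ i, (h : i < l.length) →
    (¬ ∃ (_ : 1 ≤ i) (h2 : i + 1 < l.length),
      G.edge (l[i-1]'(by omega)) (l[i]'h) ∧ G.edge (l[i+1]'h2) (l[i]'h)) →
    l[i]'h ∉ C)

/-- `A` and `B` are d-separated by `C` in `G`: there is no active trail given `C`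
from a node of `A` to a node of `B`. -/
def dsep (G : DAG d) (A B C : Set (Fin d)) : Prop :=
  ∀ a ∈ A, ∀ b ∈ B, ∀ l : List (Fin d),
    G.ActiveTrail C l → ¬(l.head? = some a ∧ l.getLast? = some b)

end DAG

/-- Every node is d-separated from its non-descendants (excluding its parents)
given its parents. -/
theorem dsep_nondescendants_given_parents (d : ℕ) (G : DAG d) (j : Fin d) :
    G.dsep {j}
      {k | k ≠ j ∧ ¬ Relation.TransGen (fun a b => (a, b) ∈ G.edges) j k ∧ k ∉ G.pa j}
      ↑(G.pa j) := by

  rintro a ha b hb l hl ⟨hhead, hlast⟩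
  simp only [Set.mem_singleton_iff] at ha
  subst ha
  obtain ⟨hkj, hknd, hkpa⟩ := hb
  obtain ⟨hlen, hnodup, hchain, hcol, hncol⟩ := hl
  have h0 : l[0]'(by omega) = a := by
    rw [List.head?_eq_getElem?, List.getElem?_eq_getElem (by omega)] at hhead
    simpa using hhead
  have hlastg : l[l.length - 1]'(by omega) = b := by
    rw [List.getLast?_eq_getElem?] at hlast
    have : l[l.length - 1]? = some b := hlast
    rw [List.getElem?_eq_getElem (by omega)] at this
    exact Option.some.injEq _ _ ▸ (by simpa using this)
  have hadj : ∀ i (h : i + 1 < l.length), G.adj (l[i]'(by omega)) (l[i+1]'h) := by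
    intro i h
    exact List.isChain_iff_getElem.mp hchain i (by omega)
  have hmemC : ∀ x : Fin d, x ∈ (↑(G.pa a) : Set (Fin d)) ↔ G.edge x a := by
    intro x
    simp [DAG.pa, DAG.edge]
  -- first edge must point forward
  have hfirst : G.edge (l[0]'(by omega)) (l[1]'(by omega)) := by
    rcases hadj 0 (by omega) with h | h
    · exact h
    · -- l[1] → a, so l[1] ∈ pa a, but l[1] is a non-collider
      exfalso
      have hpa1 : l[1]'(by omega) ∈ (↑(G.pa a) : Set (Fin d)) := by
        rw [hmemC]; rw [h0] at h; exact h
      refine hncol 1 (by omega) ?_ hpa1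
      rintro ⟨h1, h2, he1, he2⟩
      -- edge a → l[1] and l[1] → a : cycle
      exact G.acyclic a (Relation.TransGen.head (h0 ▸ he1) (Relation.TransGen.single (h0 ▸ h)))
  -- all edges point forward and everything is a descendant of a
  have forward : ∀ i (hi : i + 1 < l.length),
      G.edge (l[i]'(by omega)) (l[i+1]'hi) ∧
      Relation.TransGen (fun a b => (a, b) ∈ G.edges) a (l[i+1]'(by omega)) := by
    intro i
    induction i with
    | zero =>
      intro h
      exact ⟨hfirst, Relation.TransGen.single (h0 ▸ hfirst)⟩
    | succ n ih =>
      intro h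
      obtain ⟨he, ht⟩ := ih (by omega)
      rcases hadj (n+1) h with h' | h'
      · exact ⟨h', ht.tail h'⟩
      · exfalso
        have hc : l[n+1]'(by omega) ∈ (↑(G.pa a) : Set (Fin d)) := hcol n (by omega) ⟨he, h'⟩
        rw [hmemC] at hc
        exact G.acyclic a (ht.tail hc)
  have hnn : l.length - 2 + 1 < l.length := by omega
  obtain ⟨-, ht⟩ := forward (l.length - 2) hnn
  apply hknd
  have : l.length - 2 + 1 = l.length - 1 := by omega
  rw [show (l[l.length - 2 + 1]'hnn) = b from by rw [← hlastg]; congr 1] at ht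
  exact ht
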